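/- The singular extremal γ(t) = (0,t,0) for the distribution spanned by f₁ = ∂/∂x₁, f₂ = (1−x₁)∂/∂x₂ + x₁^p∂/∂x₃ (p ≥ 2) is strictly singular: there is no absolutely continuous curve λ : [0,1] → ℝ³ such that (γ,λ) solves the normal Hamiltonian system γ̇ = ∂H/∂λ, λ̇ = −∂H/∂x for H(x,λ) = (⟨λ,f₁(x)⟩² + ⟨λ,f₂(x)⟩²)/2. -/

import Mathlib

open MeasureTheory

/-- Euclidean pairing on `ℝ³ = ℝ × ℝ × ℝ`. -/
def dot3 (a b : ℝ × ℝ × ℝ) : ℝ := a.1 * b.1 + a.2.1 * b.2.1 + a.2.2 * b.2.2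

/-- Gradient of a scalar function on `ℝ³ = ℝ × ℝ × ℝ`. -/
noncomputable def grad3 (f : ℝ × ℝ × ℝ → ℝ) (x : ℝ × ℝ × ℝ) : ℝ × ℝ × ℝ :=
  (fderiv ℝ f x (1, 0, 0), fderiv ℝ f x (0, 1, 0), fderiv ℝ f x (0, 0, 1))

/-- The sub-Riemannian Hamiltonian of the frame `f₁ = ∂/∂x₁`,
`f₂ = (1−x₁)∂/∂x₂ + x₁^p ∂/∂x₃`. -/
noncomputable def subHam (p : ℕ) (x l : ℝ × ℝ × ℝ) : ℝ :=
  (dot3 l ((1:ℝ), (0:ℝ), (0:ℝ)) ^ 2 + dot3 l ((0:ℝ), 1 - x.1, x.1 ^ p) ^ 2) / 2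

lemma gradA (p : ℕ) (hp : 2 ≤ p) (t : ℝ) (l : ℝ × ℝ × ℝ) :
    grad3 (fun l => subHam p ((0:ℝ), t, (0:ℝ)) l) l = (l.1, l.2.1, 0) := by
  have hfn : (fun l : ℝ × ℝ × ℝ => subHam p ((0:ℝ), t, (0:ℝ)) l)
      = fun l : ℝ × ℝ × ℝ => (1/2 : ℝ) * (l.1 * l.1 + l.2.1 * l.2.1) := by
    funext l
    simp [subHam, dot3, zero_pow (by omega : p ≠ 0)]
    ring
  rw [hfn]
  have h1 : HasFDerivAt (fun l : ℝ × ℝ × ℝ => l.1)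
      (ContinuousLinearMap.fst ℝ ℝ (ℝ × ℝ)) l := hasFDerivAt_fst
  have h2 : HasFDerivAt (fun l : ℝ × ℝ × ℝ => l.2.1)
      ((ContinuousLinearMap.fst ℝ ℝ ℝ).comp (ContinuousLinearMap.snd ℝ ℝ (ℝ × ℝ))) l :=
    hasFDerivAt_fst.comp l hasFDerivAt_snd
  have hF := ((h1.mul h1).add (h2.mul h2)).const_mul (1/2 : ℝ)
  rw [grad3, (show HasFDerivAt (fun l : ℝ × ℝ × ℝ => (1/2 : ℝ) * (l.1 * l.1 + l.2.1 * l.2.1)) _ l from hF).fderiv]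
  simp
  constructor <;> ring

lemma gradB (p : ℕ) (hp : 2 ≤ p) (t : ℝ) (l : ℝ × ℝ × ℝ) :
    grad3 (fun x => subHam p x l) ((0:ℝ), t, (0:ℝ)) = (-(l.2.1 * l.2.1), 0, 0) := by
  set x₀ : ℝ × ℝ × ℝ := ((0:ℝ), t, (0:ℝ)) with hx₀
  have hgn : (fun x : ℝ × ℝ × ℝ => subHam p x l)
      = fun x : ℝ × ℝ × ℝ => (1/2 : ℝ) * (l.1 * l.1 +
        (l.2.1 * (1 - x.1) + l.2.2 * x.1 ^ p) * (l.2.1 * (1 - x.1) + l.2.2 * x.1 ^ p)) := by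
    funext x
    simp [subHam, dot3]
    ring
  rw [hgn]
  have h1 : HasFDerivAt (fun x : ℝ × ℝ × ℝ => x.1)
      (ContinuousLinearMap.fst ℝ ℝ (ℝ × ℝ)) x₀ := hasFDerivAt_fst
  have hpow : HasFDerivAt (fun x : ℝ × ℝ × ℝ => x.1 ^ p)
      (((p : ℝ) * (0:ℝ) ^ (p - 1)) • ContinuousLinearMap.fst ℝ ℝ (ℝ × ℝ)) x₀ :=
    (hasDerivAt_pow p (0:ℝ)).comp_hasFDerivAt x₀ h1
  have hu := ((h1.const_sub 1).const_mul l.2.1).add (hpow.const_mul l.2.2)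
  have hF := (((hasFDerivAt_const (l.1 * l.1) x₀).add (hu.mul hu)).const_mul (1/2 : ℝ))
  rw [grad3, (show HasFDerivAt (fun x : ℝ × ℝ × ℝ => (1/2 : ℝ) * (l.1 * l.1 +
      (l.2.1 * (1 - x.1) + l.2.2 * x.1 ^ p) * (l.2.1 * (1 - x.1) + l.2.2 * x.1 ^ p))) _ x₀ from hF).fderiv]
  simp [hx₀, zero_pow (by omega : p ≠ 0), zero_pow (by omega : p - 1 ≠ 0)]
  ring

/-- the singular extremal `γ(t) = (0,t,0)` is strictly singular:
no absolutely continuous curve of covectors `λ` makes `(γ,λ)` a solution of the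
normal Hamiltonian system `γ̇ = ∂H/∂λ`, `λ̇ = −∂H/∂x`. -/
theorem gamma_strictly_singular (p : ℕ) (hp : 2 ≤ p) :
    ¬ ∃ lam : ℝ → ℝ × ℝ × ℝ, Continuous lam ∧
      ∀ᵐ t ∂volume, t ∈ Set.Ioo (0:ℝ) 1 →
        (HasDerivAt (fun s : ℝ => ((0:ℝ), s, (0:ℝ)))
            (grad3 (fun l => subHam p ((0:ℝ), t, (0:ℝ)) l) (lam t)) t ∧
         HasDerivAt lam (-(grad3 (fun x => subHam p x (lam t)) ((0:ℝ), t, (0:ℝ)))) t) := by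
  rintro ⟨lam, hcont, hae⟩
  -- the key pointwise consequences of the Hamiltonian system
  have hkey : ∀ t : ℝ, t ∈ Set.Ioo (0:ℝ) 1 →
      (HasDerivAt (fun s : ℝ => ((0:ℝ), s, (0:ℝ)))
          (grad3 (fun l => subHam p ((0:ℝ), t, (0:ℝ)) l) (lam t)) t ∧
       HasDerivAt lam (-(grad3 (fun x => subHam p x (lam t)) ((0:ℝ), t, (0:ℝ)))) t) →
      (lam t).1 = 0 ∧ (lam t).2.1 = 1 ∧ HasDerivAt lam ((1:ℝ), (0:ℝ), (0:ℝ)) t := by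
    intro t ht hP
    obtain ⟨hP1, hP2⟩ := hP
    have hγ : HasDerivAt (fun s : ℝ => ((0:ℝ), s, (0:ℝ))) ((0:ℝ), (1:ℝ), (0:ℝ)) t :=
      (hasDerivAt_const t (0:ℝ)).prodMk ((hasDerivAt_id t).prodMk (hasDerivAt_const t (0:ℝ)))
    have huniq := hP1.unique hγ
    rw [gradA p hp t (lam t)] at huniq
    have e1 : (lam t).1 = 0 := congrArg Prod.fst huniq
    have e2 : (lam t).2.1 = 1 := congrArg (fun z : ℝ × ℝ × ℝ => z.2.1) huniq
    refine ⟨e1, e2, ?_⟩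
    rw [gradB p hp t (lam t), e2] at hP2
    convert hP2 using 1
    simp [Prod.ext_iff]
  -- the bad set has measure zero
  set N : Set ℝ := {t : ℝ | ¬ (t ∈ Set.Ioo (0:ℝ) 1 →
      (HasDerivAt (fun s : ℝ => ((0:ℝ), s, (0:ℝ)))
          (grad3 (fun l => subHam p ((0:ℝ), t, (0:ℝ)) l) (lam t)) t ∧
       HasDerivAt lam (-(grad3 (fun x => subHam p x (lam t)) ((0:ℝ), t, (0:ℝ)))) t))} with hN
  have hNnull : volume N = 0 := ae_iff.mp hae
  -- first component of lam vanishes on all of Ioo 0 1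
  have hzero : ∀ t ∈ Set.Ioo (0:ℝ) 1, (lam t).1 = 0 := by
    intro t ht
    by_contra hne
    have hZopen : IsOpen {s : ℝ | (lam s).1 ≠ 0} :=
      isOpen_ne.preimage (continuous_fst.comp hcont)
    have hUopen : IsOpen (Set.Ioo (0:ℝ) 1 ∩ {s : ℝ | (lam s).1 ≠ 0}) :=
      isOpen_Ioo.inter hZopen
    have hUsub : (Set.Ioo (0:ℝ) 1 ∩ {s : ℝ | (lam s).1 ≠ 0}) ⊆ N := by
      intro s hs
      simp only [hN, Set.mem_setOf_eq]
      intro hQ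
      exact hs.2 ((hkey s hs.1 (hQ hs.1)).1)
    have hpos : 0 < volume (Set.Ioo (0:ℝ) 1 ∩ {s : ℝ | (lam s).1 ≠ 0}) :=
      hUopen.measure_pos volume ⟨t, ht, hne⟩
    exact absurd (measure_mono_null hUsub hNnull) (ne_of_gt hpos)
  -- pick a good point
  have hIoo : ¬ (Set.Ioo (0:ℝ) 1 ⊆ N) := by
    intro hsub
    have := measure_mono_null hsub hNnull
    simp [Real.volume_Ioo] at this
  obtain ⟨t₀, ht₀, ht₀N⟩ := Set.not_subset.mp hIoo
  have hQ := not_not.mp (by simpa [hN] using ht₀N)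
  obtain ⟨-, -, hder⟩ := hkey t₀ ht₀ (hQ ht₀.1 ht₀.2)
  -- derivative of the first component is 1
  have hfst : HasDerivAt (fun s : ℝ => (lam s).1) 1 t₀ := by
    have := (ContinuousLinearMap.fst ℝ ℝ (ℝ × ℝ)).hasFDerivAt.comp_hasDerivAt t₀ hder
    exact (by simpa using this : HasDerivAt (Prod.fst ∘ lam) 1 t₀)
  -- but the first component is locally zero
  have hconst : HasDerivAt (fun s : ℝ => (lam s).1) 0 t₀ := by
    have hev : ∀ᶠ s in nhds t₀, (lam s).1 = 0 := by
      filter_upwards [isOpen_Ioo.mem_nhds ht₀] with s hs using hzero s hs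
    exact (hasDerivAt_const t₀ (0:ℝ)).congr_of_eventuallyEq hev
  exact one_ne_zero (hfst.unique hconst)
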